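/- For every real a > 0, the a-th power of the Jeffreys divergence between Poincaré distributions is not a metric on the symmetric positive-definite 2×2 matrices: there exist real 2×2 symmetric positive-definite matrices θ⁽¹⁾, θ⁽²⁾, θ⁽³⁾ such that D_J[p_{θ⁽¹⁾} : p_{θ⁽³⁾}]^a > D_J[p_{θ⁽¹⁾} : p_{θ⁽²⁾}]^a + D_J[p_{θ⁽²⁾} : p_{θ⁽³⁾}]^a, i.e. the triangle inequality fails. -/

import Mathlib

open MeasureTheory Matrix

/-- The Poincaré density on the upper half-plane, as a density on `ℝ × ℝ`
(vanishing for `y ≤ 0`), indexed by a 2×2 symmetric positive-definite matrix. -/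
noncomputable def poincareDensity (θ : Matrix (Fin 2) (Fin 2) ℝ) (z : ℝ × ℝ) : ℝ :=
  if 0 < z.2 then
    Real.sqrt θ.det * Real.exp (2 * Real.sqrt θ.det) / Real.pi *
      Real.exp (-(θ 0 0 * (z.1 ^ 2 + z.2 ^ 2) + 2 * θ 0 1 * z.1 + θ 1 1) / z.2) / z.2 ^ 2
  else 0

/-- The Kullback-Leibler divergence between two densities on the upper half-plane. -/
noncomputable def klH (p q : ℝ × ℝ → ℝ) : ℝ :=
  ∫ z in {w : ℝ × ℝ | 0 < w.2}, p z * Real.log (p z / q z)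

/-- The Jeffreys divergence (symmetrized KL divergence). -/
noncomputable def jeffreysH (p q : ℝ × ℝ → ℝ) : ℝ := klH p q + klH q p

open Real Set

lemma sq_mul_exp_le (b x : ℝ) (hb : 0 < b) : x ^ 2 * Real.exp (-b * x ^ 2) ≤ 1 / b := by
  have h1 := Real.add_one_le_exp (b * x ^ 2)
  have hv : Real.exp (-b * x ^ 2) * Real.exp (b * x ^ 2) = 1 := by
    rw [← Real.exp_add]; ring_nf; exact Real.exp_zero
  have hvpos := Real.exp_pos (-b * x ^ 2)
  have := mul_le_mul_of_nonneg_left h1 hvpos.le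
  rw [hv] at this
  rw [le_div_iff₀ hb]
  nlinarith [sq_nonneg x, hvpos.le]

lemma integrable_sq_gauss {b : ℝ} (hb : 0 < b) :
    Integrable (fun x : ℝ => x ^ 2 * Real.exp (-b * x ^ 2)) := by
  have h := integrable_exp_neg_mul_sq (by linarith : (0:ℝ) < b/2)
  apply (h.const_mul (2/b)).mono'
  · exact ((measurable_id.pow_const 2).mul ((measurable_id.pow_const 2).const_mul (-b)).exp).aestronglyMeasurable
  · filter_upwards with x
    rw [Real.norm_eq_abs, abs_mul, abs_of_nonneg (sq_nonneg x), abs_of_nonneg (Real.exp_pos _).le]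
    have key := sq_mul_exp_le (b/2) x (by linarith)
    calc x ^ 2 * Real.exp (-b * x ^ 2) 
        = (x^2 * Real.exp (-(b/2) * x^2)) * Real.exp (-(b/2) * x^2) := by
          rw [mul_assoc, ← Real.exp_add]; ring_nf
      _ ≤ (1/(b/2)) * Real.exp (-(b/2)*x^2) := mul_le_mul_of_nonneg_right key (Real.exp_pos _).le
      _ = 2/b * Real.exp (-(b/2)*x^2) := by rw [one_div, inv_div]

lemma integral_sq_gauss {b : ℝ} (hb : 0 < b) :
    ∫ x : ℝ, x ^ 2 * Real.exp (-b * x ^ 2) = Real.sqrt (π / b) / (2 * b) := by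
  -- F x = x * exp(-b x^2), F' x = exp(-b x^2) - 2b x^2 exp(-b x^2)
  have hF : ∀ x : ℝ, HasDerivAt (fun x : ℝ => x * Real.exp (-b * x ^ 2))
      (Real.exp (-b * x ^ 2) - 2 * b * (x ^ 2 * Real.exp (-b * x ^ 2))) x := by
    intro x
    have h1 : HasDerivAt (fun x : ℝ => -b * x ^ 2) (-b * (2 * x)) x := by
      simpa using ((hasDerivAt_pow 2 x).const_mul (-b))
    have h2 := (h1.exp).const_mul 1
    have := (hasDerivAt_id x).mul h1.exp
    refine this.congr_deriv ?_
    simp only [id]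
    ring
  have hI : Integrable (fun x : ℝ => Real.exp (-b * x ^ 2) - 2 * b * (x ^ 2 * Real.exp (-b * x ^ 2))) :=
    (integrable_exp_neg_mul_sq hb).sub ((integrable_sq_gauss hb).const_mul _)
  have hFint : Integrable (fun x : ℝ => x * Real.exp (-b * x ^ 2)) := integrable_mul_exp_neg_mul_sq hb
  have h0 := integral_eq_zero_of_hasDerivAt_of_integrable hF hI hFint
  rw [integral_sub (integrable_exp_neg_mul_sq hb) ((integrable_sq_gauss hb).const_mul _),
    integral_gaussian, MeasureTheory.integral_const_mul] at h0
  have h2b : (2 * b) ≠ 0 := by positivity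
  field_simp at h0 ⊢
  linarith

section
variable {s : ℝ}

/-- the substitution map φ y = √s (√y - 1/√y) -/
noncomputable def phm (s y : ℝ) : ℝ := Real.sqrt s * (Real.sqrt y - (Real.sqrt y)⁻¹)
noncomputable def phm' (s y : ℝ) : ℝ := Real.sqrt s * ((2 * Real.sqrt y)⁻¹ + (2 * y * Real.sqrt y)⁻¹)

lemma phm_hasDeriv (hs : 0 < s) {y : ℝ} (hy : y ∈ Ioi (0:ℝ)) : HasDerivAt (phm s) (phm' s y) y := by
  have hy0 : (0:ℝ) < y := hy
  have hsy : Real.sqrt y ≠ 0 := by positivity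
  have h1 : HasDerivAt Real.sqrt (1 / (2 * Real.sqrt y)) y := Real.hasDerivAt_sqrt hy0.ne'
  have h2 : HasDerivAt (fun y => (Real.sqrt y)⁻¹) (-(1 / (2 * Real.sqrt y)) / (Real.sqrt y) ^ 2) y := h1.inv hsy
  have h3 := (h1.sub h2).const_mul (Real.sqrt s)
  refine h3.congr_deriv ?_
  have hyy : Real.sqrt y ^ 2 = y := Real.sq_sqrt hy0.le
  unfold phm'
  rw [show 2 * y * Real.sqrt y = 2 * Real.sqrt y ^ 3 by rw [pow_succ, hyy]; ring]
  field_simp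
  ring

lemma phm_injOn (hs : 0 < s) : InjOn (phm s) (Ioi 0) := by
  have : StrictMonoOn (phm s) (Ioi 0) := by
    intro x hx y hy hxy
    have hx0 : (0:ℝ) < x := hx
    have hy0 : (0:ℝ) < y := hy
    have h1 : Real.sqrt x < Real.sqrt y := Real.sqrt_lt_sqrt hx0.le hxy
    have h2 : (Real.sqrt y)⁻¹ < (Real.sqrt x)⁻¹ := by
      apply inv_strictAnti₀ (by positivity) h1
    unfold phm
    have hss : 0 < Real.sqrt s := Real.sqrt_pos.mpr hs
    apply mul_lt_mul_of_pos_left _ hss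
    linarith
  exact this.injOn

lemma phm_image (hs : 0 < s) : (phm s) '' (Ioi 0) = univ := by
  apply eq_univ_of_forall
  intro u
  set v := u / Real.sqrt s with hv
  have hss : 0 < Real.sqrt s := Real.sqrt_pos.mpr hs
  set t := (v + Real.sqrt (v ^ 2 + 4)) / 2 with ht
  have h4 : Real.sqrt (v^2+4) ^ 2 = v^2+4 := Real.sq_sqrt (by positivity)
  have hvlt : -v < Real.sqrt (v^2+4) := by
    nlinarith [Real.sqrt_nonneg (v^2+4), abs_nonneg v, sq_abs v, neg_abs_le v, le_abs_self v]
  have ht0 : 0 < t := by rw [ht]; nlinarith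
  have htt : t ^ 2 - v * t - 1 = 0 := by rw [ht]; nlinarith
  refine ⟨t ^ 2, mem_Ioi.mpr (by positivity), ?_⟩
  unfold phm
  rw [Real.sqrt_sq ht0.le]
  have : Real.sqrt s * (t - t⁻¹) = Real.sqrt s * v := by
    congr 1
    field_simp
    nlinarith
  rw [this, hv]
  field_simp

/-- change of variables: ∫_{Ioi 0} φ' y * g (φ y) dy = ∫ g -/
lemma phm_integral (hs : 0 < s) (g : ℝ → ℝ) :
    ∫ y in Ioi (0:ℝ), phm' s y * g (phm s y) = ∫ u, g u := by
  have := integral_image_eq_integral_abs_deriv_smul measurableSet_Ioi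
    (fun x hx => (phm_hasDeriv hs hx).hasDerivWithinAt) (phm_injOn hs) g
  rw [phm_image hs] at this
  rw [← setIntegral_univ (f := g), this]
  apply setIntegral_congr_fun measurableSet_Ioi
  intro y hy
  have hy0 : (0:ℝ) < y := hy
  have : 0 ≤ phm' s y := by
    unfold phm'
    have h1 : 0 < Real.sqrt y := Real.sqrt_pos.mpr hy0
    positivity
  simp [abs_of_nonneg this, smul_eq_mul]

lemma phm_integrableOn (hs : 0 < s) (g : ℝ → ℝ) :
    IntegrableOn (fun y => phm' s y * g (phm s y)) (Ioi (0:ℝ)) ↔ Integrable g := by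
  have := integrableOn_image_iff_integrableOn_abs_deriv_smul measurableSet_Ioi
    (fun x hx => (phm_hasDeriv hs hx).hasDerivWithinAt) (phm_injOn hs) g
  rw [phm_image hs, integrableOn_univ] at this
  rw [this]
  apply integrableOn_congr_fun _ measurableSet_Ioi
  intro y hy
  have hy0 : (0:ℝ) < y := hy
  have : 0 ≤ phm' s y := by
    unfold phm'
    have h1 : 0 < Real.sqrt y := Real.sqrt_pos.mpr hy0
    positivity
  simp [abs_of_nonneg this, smul_eq_mul]

end

noncomputable def EE (s y : ℝ) : ℝ := Real.exp (-s * (y + 1/y))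

-- rpow helpers on Ioi 0
lemma rpow_half {y : ℝ} (hy : 0 < y) : y ^ ((1:ℝ)/2) = Real.sqrt y := (Real.sqrt_eq_rpow y).symm

lemma rpow_neg_half {y : ℝ} (hy : 0 < y) : y ^ (-(1:ℝ)/2) = (Real.sqrt y)⁻¹ := by
  rw [neg_div, Real.rpow_neg hy.le, ← Real.sqrt_eq_rpow]

lemma rpow_neg_3half {y : ℝ} (hy : 0 < y) : y ^ (-(3:ℝ)/2) = (y * Real.sqrt y)⁻¹ := by
  rw [neg_div, Real.rpow_neg hy.le]
  congr 1
  rw [show (3:ℝ)/2 = 1 + 1/2 by norm_num, Real.rpow_add hy, Real.rpow_one, ← Real.sqrt_eq_rpow]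

lemma rpow_neg_5half {y : ℝ} (hy : 0 < y) : y ^ (-(5:ℝ)/2) = (y^2 * Real.sqrt y)⁻¹ := by
  rw [neg_div, Real.rpow_neg hy.le]
  congr 1
  rw [show (5:ℝ)/2 = 2 + 1/2 by norm_num, Real.rpow_add hy, ← Real.sqrt_eq_rpow,
    Real.rpow_two]

-- integrability of y ^ ν * EE
lemma exp_neg_le {t : ℝ} (ht : 0 ≤ t) : Real.exp (-t) * t^2 ≤ 4 := by
  have h1 := Real.add_one_le_exp (t/2)
  have h2 : Real.exp t ≥ t^2/4 := by
    have he := Real.exp_add (t/2) (t/2)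
    rw [show t/2+t/2 = t by ring] at he
    have hmul := mul_le_mul h1 h1 (by linarith) (Real.exp_pos (t/2)).le
    nlinarith [ht]
  have h3 : Real.exp (-t) * Real.exp t = 1 := by rw [← Real.exp_add]; simp
  nlinarith [Real.exp_pos (-t), Real.exp_pos t]

lemma intOn_T {s : ℝ} (hs : 0 < s) (ν : ℝ) (hν : -3 < ν) :
    IntegrableOn (fun y => y ^ ν * EE s y) (Ioi (0:ℝ)) := by
  have hcomp : IntegrableOn (fun y : ℝ => (4/s^2) * (y ^ (ν+2) * Real.exp (-s * y))) (Ioi 0) := by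
    have := integrableOn_rpow_mul_exp_neg_mul_rpow (by linarith : (-1:ℝ) < ν + 2) one_pos hs
    apply IntegrableOn.congr_fun (this.const_mul (4/s^2)) _ measurableSet_Ioi
    intro y hy
    simp only [Real.rpow_one]
  apply hcomp.mono'
  · apply AEStronglyMeasurable.mul _ _
    · apply Measurable.aestronglyMeasurable
      fun_prop
    · unfold EE
      apply Measurable.aestronglyMeasurable
      fun_prop
  · filter_upwards [ae_restrict_mem measurableSet_Ioi] with y hy
    have hy0 : (0:ℝ) < y := hy
    have hE : EE s y = Real.exp (-s*y) * Real.exp (-(s/y)) := by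
      unfold EE; rw [← Real.exp_add]; congr 1; field_simp; ring
    rw [Real.norm_eq_abs, abs_mul, abs_of_nonneg (Real.rpow_nonneg hy0.le _), hE,
      abs_of_nonneg (by positivity)]
    have key := exp_neg_le (show 0 ≤ s/y by positivity)
    have key2 : Real.exp (-(s/y)) * (s^2/y^2) ≤ 4 := by rw [← div_pow]; exact key
    have h2 : Real.exp (-(s/y)) ≤ 4 * y^2 / s^2 := by
      rw [le_div_iff₀ (by positivity : (0:ℝ) < s^2)]
      calc Real.exp (-(s/y)) * s^2 = (Real.exp (-(s/y)) * (s^2/y^2)) * y^2 := by field_simp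
        _ ≤ 4 * y^2 := mul_le_mul_of_nonneg_right key2 (sq_nonneg y)
    have h3 : y ^ (ν+2) = y ^ ν * y^2 := by
      rw [Real.rpow_add hy0, Real.rpow_two]
    rw [h3]
    have hr : (0:ℝ) ≤ y ^ ν := Real.rpow_nonneg hy0.le _
    calc y ^ ν * (Real.exp (-s*y) * Real.exp (-(s/y)))
        ≤ y ^ ν * (Real.exp (-s*y) * (4*y^2/s^2)) := by
          apply mul_le_mul_of_nonneg_left _ hr
          exact mul_le_mul_of_nonneg_left h2 (Real.exp_pos _).le
      _ = 4/s^2 * (y ^ ν * y^2 * Real.exp (-s*y)) := by ring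

-- inversion substitution on Ioi 0
lemma inv_hasDeriv {y : ℝ} (hy : y ∈ Ioi (0:ℝ)) :
    HasDerivWithinAt (fun t : ℝ => t⁻¹) (-(y^2)⁻¹) (Ioi 0) y :=
  (hasDerivAt_inv (ne_of_gt hy)).hasDerivWithinAt

lemma inv_image : (fun t : ℝ => t⁻¹) '' (Ioi 0) = Ioi (0:ℝ) := by
  ext x
  simp only [mem_image, mem_Ioi]
  constructor
  · rintro ⟨y, hy, rfl⟩; positivity
  · intro hx; exact ⟨x⁻¹, by positivity, by field_simp⟩

lemma inv_injOn : InjOn (fun t : ℝ => t⁻¹) (Ioi 0) := fun x hx y hy h => by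
  have hx0 : (0:ℝ) < x := hx
  have hy0 : (0:ℝ) < y := hy
  field_simp at h
  exact h.symm

lemma integral_inv_subst (h : ℝ → ℝ) :
    ∫ y in Ioi (0:ℝ), h y = ∫ y in Ioi (0:ℝ), (y^2)⁻¹ * h y⁻¹ := by
  have := integral_image_eq_integral_abs_deriv_smul measurableSet_Ioi
    (fun x hx => inv_hasDeriv hx) inv_injOn h
  rw [inv_image] at this
  rw [this]
  apply setIntegral_congr_fun measurableSet_Ioi
  intro y hy
  have hy0 : (0:ℝ) < y := hy
  simp only [abs_neg, abs_of_nonneg (by positivity : (0:ℝ) ≤ (y^2)⁻¹), smul_eq_mul]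

lemma EE_inv {s y : ℝ} (hy : 0 < y) : EE s y⁻¹ = EE s y := by
  unfold EE
  rw [one_div, inv_inv, one_div]
  ring_nf

-- the four basic integrals
noncomputable def T1 (s : ℝ) : ℝ := ∫ y in Ioi (0:ℝ), (Real.sqrt y)⁻¹ * EE s y
noncomputable def T3 (s : ℝ) : ℝ := ∫ y in Ioi (0:ℝ), (y * Real.sqrt y)⁻¹ * EE s y
noncomputable def T5 (s : ℝ) : ℝ := ∫ y in Ioi (0:ℝ), (y^2 * Real.sqrt y)⁻¹ * EE s y
noncomputable def Tp (s : ℝ) : ℝ := ∫ y in Ioi (0:ℝ), Real.sqrt y * EE s y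

lemma intOn_T1 {s : ℝ} (hs : 0 < s) : IntegrableOn (fun y => (Real.sqrt y)⁻¹ * EE s y) (Ioi (0:ℝ)) :=
  (intOn_T hs (-(1:ℝ)/2) (by norm_num)).congr_fun (fun y hy => by beta_reduce; rw [rpow_neg_half hy]) measurableSet_Ioi

lemma intOn_T3 {s : ℝ} (hs : 0 < s) : IntegrableOn (fun y => (y * Real.sqrt y)⁻¹ * EE s y) (Ioi (0:ℝ)) :=
  (intOn_T hs (-(3:ℝ)/2) (by norm_num)).congr_fun (fun y hy => by beta_reduce; rw [rpow_neg_3half hy]) measurableSet_Ioi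

lemma intOn_T5 {s : ℝ} (hs : 0 < s) : IntegrableOn (fun y => (y^2 * Real.sqrt y)⁻¹ * EE s y) (Ioi (0:ℝ)) :=
  (intOn_T hs (-(5:ℝ)/2) (by norm_num)).congr_fun (fun y hy => by beta_reduce; rw [rpow_neg_5half hy]) measurableSet_Ioi

lemma intOn_Tp {s : ℝ} (hs : 0 < s) : IntegrableOn (fun y => Real.sqrt y * EE s y) (Ioi (0:ℝ)) :=
  (intOn_T hs ((1:ℝ)/2) (by norm_num)).congr_fun (fun y hy => by beta_reduce; rw [rpow_half hy]) measurableSet_Ioi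

lemma T1_eq_T3 (s : ℝ) : T1 s = T3 s := by
  unfold T1 T3
  rw [integral_inv_subst (fun y => (Real.sqrt y)⁻¹ * EE s y)]
  apply setIntegral_congr_fun measurableSet_Ioi
  intro y hy
  have hy0 : (0:ℝ) < y := hy
  simp only []
  rw [EE_inv hy0, Real.sqrt_inv, inv_inv]
  have h1 : Real.sqrt y > 0 := Real.sqrt_pos.mpr hy0
  have h2 : Real.sqrt y * Real.sqrt y = y := Real.mul_self_sqrt hy0.le
  field_simp
  linear_combination EE s y * h2

lemma Tp_eq_T5 (s : ℝ) : Tp s = T5 s := by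
  unfold Tp T5
  rw [integral_inv_subst (fun y => Real.sqrt y * EE s y)]
  apply setIntegral_congr_fun measurableSet_Ioi
  intro y hy
  have hy0 : (0:ℝ) < y := hy
  simp only []
  rw [EE_inv hy0, Real.sqrt_inv]
  ring

lemma phm_sq {s y : ℝ} (hs : 0 < s) (hy : 0 < y) :
    phm s y ^ 2 = s * (y + 1/y - 2) := by
  unfold phm
  have h2 : Real.sqrt y * Real.sqrt y = y := Real.mul_self_sqrt hy.le
  have h1 : Real.sqrt y > 0 := Real.sqrt_pos.mpr hy
  have hss : Real.sqrt s * Real.sqrt s = s := Real.mul_self_sqrt hs.le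
  field_simp
  ring_nf
  rw [show Real.sqrt y ^ 4 = (Real.sqrt y ^ 2) ^ 2 by ring, Real.sq_sqrt hs.le, Real.sq_sqrt hy.le]
  ring

lemma T13_val {s : ℝ} (hs : 0 < s) :
    T1 s + T3 s = 2 * Real.sqrt π * Real.exp (-2*s) / Real.sqrt s := by
  have h1 : Real.sqrt s > 0 := Real.sqrt_pos.mpr hs
  have key : ∫ y in Ioi (0:ℝ), phm' s y * Real.exp (-(phm s y)^2) = Real.sqrt π := by
    rw [phm_integral hs (fun u => Real.exp (-u^2))]
    have := integral_gaussian 1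
    simpa using this
  have expand : ∀ y ∈ Ioi (0:ℝ),
      phm' s y * Real.exp (-(phm s y)^2)
        = (Real.sqrt s / 2) * Real.exp (2*s) * (((Real.sqrt y)⁻¹ * EE s y) + ((y * Real.sqrt y)⁻¹ * EE s y)) := by
    intro y hy
    have hy0 : (0:ℝ) < y := hy
    have h2 : Real.sqrt y > 0 := Real.sqrt_pos.mpr hy0
    have hE : Real.exp (-(phm s y)^2) = Real.exp (2*s) * EE s y := by
      rw [phm_sq hs hy0]
      unfold EE
      rw [← Real.exp_add]
      congr 1
      ring
    rw [hE]
    unfold phm'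
    have h3 : Real.sqrt y * Real.sqrt y = y := Real.mul_self_sqrt hy0.le
    field_simp
  rw [setIntegral_congr_fun measurableSet_Ioi expand] at key
  rw [integral_const_mul, integral_add ((intOn_T1 hs)) ((intOn_T3 hs))] at key
  unfold T1 T3
  have : Real.sqrt s / 2 * Real.exp (2*s) ≠ 0 := by positivity
  field_simp at key ⊢
  rw [Real.exp_neg]
  field_simp
  nlinarith [key, Real.exp_pos (2*s), Real.sqrt_nonneg π]

lemma T3_val {s : ℝ} (hs : 0 < s) :
    T3 s = Real.sqrt π * Real.exp (-2*s) / Real.sqrt s := by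
  have h := T13_val hs
  rw [← T1_eq_T3] at h ⊢
  linear_combination h / 2

lemma T1_val {s : ℝ} (hs : 0 < s) :
    T1 s = Real.sqrt π * Real.exp (-2*s) / Real.sqrt s := by
  rw [T1_eq_T3]; exact T3_val hs

lemma T5p_val {s : ℝ} (hs : 0 < s) :
    Tp s + T5 s - T1 s - T3 s = Real.sqrt π * Real.exp (-2*s) / (s * Real.sqrt s) := by
  have h1 : Real.sqrt s > 0 := Real.sqrt_pos.mpr hs
  have key : ∫ y in Ioi (0:ℝ), phm' s y * ((phm s y)^2 * Real.exp (-(phm s y)^2)) = Real.sqrt π / 2 := by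
    rw [phm_integral hs (fun u => u^2 * Real.exp (-u^2))]
    have := integral_sq_gauss (b := 1) one_pos
    simp only [neg_mul, one_mul, div_one] at this
    rw [this]
    ring
  have expand : ∀ y ∈ Ioi (0:ℝ),
      phm' s y * ((phm s y)^2 * Real.exp (-(phm s y)^2))
        = (s * Real.sqrt s / 2) * Real.exp (2*s) *
          ((Real.sqrt y * EE s y) + ((y^2 * Real.sqrt y)⁻¹ * EE s y)
            - ((Real.sqrt y)⁻¹ * EE s y) - ((y * Real.sqrt y)⁻¹ * EE s y)) := by
    intro y hy
    have hy0 : (0:ℝ) < y := hy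
    have h2 : Real.sqrt y > 0 := Real.sqrt_pos.mpr hy0
    have hE : Real.exp (-(phm s y)^2) = Real.exp (2*s) * EE s y := by
      rw [phm_sq hs hy0]
      unfold EE
      rw [← Real.exp_add]
      congr 1
      ring
    rw [hE, phm_sq hs hy0]
    unfold phm'
    set r := Real.sqrt y with hrdef
    set q := Real.sqrt s with hqdef
    have h3 : r * r = y := Real.mul_self_sqrt hy0.le
    have hss : q * q = s := Real.mul_self_sqrt hs.le
    have hr0 : r ≠ 0 := by rw [hrdef]; positivity
    have hq0 : q ≠ 0 := by rw [hqdef]; positivity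
    rw [← h3, ← hss]
    field_simp
    ring
  rw [setIntegral_congr_fun measurableSet_Ioi expand] at key
  have i12 : Integrable (fun y => Real.sqrt y * EE s y + (y^2 * Real.sqrt y)⁻¹ * EE s y)
      (volume.restrict (Ioi 0)) := (intOn_Tp hs).add (intOn_T5 hs)
  have i123 : Integrable (fun y => Real.sqrt y * EE s y + (y^2 * Real.sqrt y)⁻¹ * EE s y
      - (Real.sqrt y)⁻¹ * EE s y) (volume.restrict (Ioi 0)) := i12.sub (intOn_T1 hs)
  rw [integral_const_mul, integral_sub i123 (intOn_T3 hs),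
    integral_sub i12 (intOn_T1 hs),
    integral_add (intOn_Tp hs) (intOn_T5 hs)] at key
  unfold T1 T3 T5 Tp
  set A := ∫ y in Ioi (0:ℝ), Real.sqrt y * EE s y with hA
  set B := ∫ y in Ioi (0:ℝ), (y^2*Real.sqrt y)⁻¹ * EE s y with hB
  set C := ∫ y in Ioi (0:ℝ), (Real.sqrt y)⁻¹ * EE s y with hC
  set D := ∫ y in Ioi (0:ℝ), (y*Real.sqrt y)⁻¹ * EE s y with hD
  have hs' : (s:ℝ) ≠ 0 := hs.ne'
  have hss' : Real.sqrt s ≠ 0 := by positivity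
  have he' : Real.exp (2*s) ≠ 0 := (Real.exp_pos _).ne'
  rw [show (-2:ℝ)*s = -(2*s) by ring, Real.exp_neg]
  field_simp
  linear_combination 2 * key

lemma T5_val {s : ℝ} (hs : 0 < s) :
    T5 s = Real.sqrt π * Real.exp (-2*s) / Real.sqrt s
      + Real.sqrt π * Real.exp (-2*s) / (2 * s * Real.sqrt s) := by
  have h := T5p_val hs
  rw [Tp_eq_T5, T1_val hs, T3_val hs] at h
  have h1 : Real.sqrt s > 0 := Real.sqrt_pos.mpr hs
  field_simp at h ⊢
  linarith

-- 2D part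
noncomputable def FF (s : ℝ) (z : ℝ × ℝ) : ℝ :=
  Real.exp (-(s * (z.1^2 + z.2^2 + 1)) / z.2) / z.2^2

noncomputable def qq (z : ℝ × ℝ) : ℝ := (z.1^2 + z.2^2 + 1) / z.2

lemma S_eq : {w : ℝ × ℝ | 0 < w.2} = (univ ×ˢ Ioi (0:ℝ)) := by
  ext w; simp [Set.mem_prod]

lemma restrict_eq2 : (volume : Measure (ℝ×ℝ)).restrict (univ ×ˢ Ioi (0:ℝ))
    = (volume : Measure ℝ).prod ((volume : Measure ℝ).restrict (Ioi 0)) := by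
  rw [Measure.volume_eq_prod, ← Measure.prod_restrict, Measure.restrict_univ]

lemma FF_meas (s : ℝ) : Measurable (FF s) := by
  unfold FF; fun_prop

lemma FF_factor {s : ℝ} {x y : ℝ} (hy : 0 < y) :
    FF s (x, y) = Real.exp (-(s/y) * x^2) * (Real.exp (-s*(y+1/y)) / y^2) := by
  show Real.exp (-(s * (x^2 + y^2 + 1)) / y) / y^2 = _
  rw [mul_div_assoc', ← Real.exp_add]
  congr 2
  field_simp
  ring

lemma FFq_factor {s : ℝ} {x y : ℝ} (hy : 0 < y) :
    FF s (x, y) * qq (x, y)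
      = (x^2 * Real.exp (-(s/y) * x^2) + (y^2+1) * Real.exp (-(s/y) * x^2))
          * (Real.exp (-s*(y+1/y)) / y^3) := by
  rw [FF_factor hy]
  unfold qq
  field_simp
  ring

-- inner integrals
lemma inner_FF {s y : ℝ} (hs : 0 < s) (hy : 0 < y) :
    ∫ x : ℝ, FF s (x, y) = (Real.sqrt π / Real.sqrt s) * ((y * Real.sqrt y)⁻¹ * EE s y) := by
  have : (fun x : ℝ => FF s (x, y)) = fun x => Real.exp (-(s/y) * x^2) * (Real.exp (-s*(y+1/y)) / y^2) := by
    ext x; exact FF_factor hy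
  rw [this, integral_mul_const, integral_gaussian]
  have h1 : Real.sqrt (π / (s/y)) = Real.sqrt π * Real.sqrt y / Real.sqrt s := by
    rw [Real.sqrt_div Real.pi_pos.le, Real.sqrt_div hs.le, div_div_eq_mul_div]
  rw [h1]
  have h2 : Real.sqrt y > 0 := Real.sqrt_pos.mpr hy
  have h3 : Real.sqrt y * Real.sqrt y = y := Real.mul_self_sqrt hy.le
  have h4 : Real.sqrt y / y^2 = (y * Real.sqrt y)⁻¹ := by
    rw [inv_eq_one_div, div_eq_div_iff (by positivity) (by positivity)]
    linear_combination y * h3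
  calc Real.sqrt π * Real.sqrt y / Real.sqrt s * (Real.exp (-s*(y+1/y)) / y^2)
      = Real.sqrt π / Real.sqrt s * (Real.sqrt y / y^2) * Real.exp (-s*(y+1/y)) := by ring
    _ = Real.sqrt π / Real.sqrt s * ((y * Real.sqrt y)⁻¹ * EE s y) := by rw [h4]; unfold EE; ring

lemma intOn_inner_FF {s y : ℝ} (hs : 0 < s) (hy : 0 < y) :
    Integrable (fun x : ℝ => FF s (x, y)) := by
  have : (fun x : ℝ => FF s (x, y)) = fun x => Real.exp (-(s/y) * x^2) * (Real.exp (-s*(y+1/y)) / y^2) := by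
    ext x; exact FF_factor hy
  rw [this]
  exact (integrable_exp_neg_mul_sq (by positivity)).mul_const _

lemma inner_FFq {s y : ℝ} (hs : 0 < s) (hy : 0 < y) :
    ∫ x : ℝ, FF s (x, y) * qq (x, y)
      = (Real.sqrt π / Real.sqrt s) *
          ((1/(2*s)) * ((y * Real.sqrt y)⁻¹ * EE s y) + (Real.sqrt y)⁻¹ * EE s y
            + (y^2 * Real.sqrt y)⁻¹ * EE s y) := by
  have hfac : (fun x : ℝ => FF s (x, y) * qq (x, y))
      = fun x => (x^2 * Real.exp (-(s/y) * x^2) + (y^2+1) * Real.exp (-(s/y) * x^2))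
          * (Real.exp (-s*(y+1/y)) / y^3) := by
    ext x; exact FFq_factor hy
  have hb : (0:ℝ) < s/y := by positivity
  rw [hfac, integral_mul_const,
    integral_add (integrable_sq_gauss hb) ((integrable_exp_neg_mul_sq hb).const_mul _),
    integral_sq_gauss hb, integral_const_mul, integral_gaussian]
  have h1 : Real.sqrt (π / (s/y)) = Real.sqrt π * Real.sqrt y / Real.sqrt s := by
    rw [Real.sqrt_div Real.pi_pos.le, Real.sqrt_div hs.le, div_div_eq_mul_div]
  rw [h1]
  have h2 : Real.sqrt y > 0 := Real.sqrt_pos.mpr hy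
  have h3 : Real.sqrt y * Real.sqrt y = y := Real.mul_self_sqrt hy.le
  have hy3 : (y:ℝ)^3 ≠ 0 := by positivity
  have e1 : Real.sqrt y / y^2 = (y * Real.sqrt y)⁻¹ := by
    rw [inv_eq_one_div, div_eq_div_iff (by positivity) (by positivity)]
    linear_combination y * h3
  have e2 : Real.sqrt y / y = (Real.sqrt y)⁻¹ := by
    rw [inv_eq_one_div, div_eq_div_iff (by positivity) (by positivity)]
    linear_combination h3
  have e3 : Real.sqrt y / y^3 = (y^2 * Real.sqrt y)⁻¹ := by
    rw [inv_eq_one_div, div_eq_div_iff (by positivity) (by positivity)]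
    linear_combination y^2 * h3
  have expand : (Real.sqrt π * Real.sqrt y / Real.sqrt s / (2 * (s/y))
        + (y^2+1) * (Real.sqrt π * Real.sqrt y / Real.sqrt s)) * (Real.exp (-s*(y+1/y)) / y^3)
      = (Real.sqrt π / Real.sqrt s) *
          ((1/(2*s)) * (Real.sqrt y / y^2) * EE s y + (Real.sqrt y / y) * EE s y
            + (Real.sqrt y / y^3) * EE s y) := by
    unfold EE
    field_simp
    ring
  rw [expand, e1, e2, e3]
  ring

lemma intOn_inner_FFq {s y : ℝ} (hs : 0 < s) (hy : 0 < y) :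
    Integrable (fun x : ℝ => FF s (x, y) * qq (x, y)) := by
  have hfac : (fun x : ℝ => FF s (x, y) * qq (x, y))
      = fun x => (x^2 * Real.exp (-(s/y) * x^2) + (y^2+1) * Real.exp (-(s/y) * x^2))
          * (Real.exp (-s*(y+1/y)) / y^3) := by
    ext x; exact FFq_factor hy
  have hb : (0:ℝ) < s/y := by positivity
  rw [hfac]
  exact ((integrable_sq_gauss hb).add ((integrable_exp_neg_mul_sq hb).const_mul _)).mul_const _

lemma FF_nonneg (s : ℝ) (z : ℝ × ℝ) : 0 ≤ FF s z := by
  unfold FF; positivity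

lemma intOn_FF {s : ℝ} (hs : 0 < s) :
    IntegrableOn (FF s) {w : ℝ × ℝ | 0 < w.2} := by
  rw [IntegrableOn, S_eq, restrict_eq2]
  rw [integrable_prod_iff' (FF_meas s).aestronglyMeasurable]
  constructor
  · filter_upwards [ae_restrict_mem measurableSet_Ioi] with y hy
    exact intOn_inner_FF hs hy
  · apply Integrable.congr ((intOn_T3 hs).const_mul (Real.sqrt π / Real.sqrt s))
    filter_upwards [ae_restrict_mem measurableSet_Ioi] with y hy
    rw [← inner_FF hs hy]
    congr 1
    ext x
    rw [Real.norm_eq_abs, abs_of_nonneg (FF_nonneg s (x, y))]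

lemma int_FF {s : ℝ} (hs : 0 < s) :
    ∫ z in {w : ℝ × ℝ | 0 < w.2}, FF s z = π * Real.exp (-2*s) / s := by
  have hInt : Integrable (FF s) ((volume : Measure ℝ).prod ((volume : Measure ℝ).restrict (Ioi 0))) := by
    have := intOn_FF hs
    rwa [IntegrableOn, S_eq, restrict_eq2] at this
  rw [show (∫ z in {w : ℝ × ℝ | 0 < w.2}, FF s z) = ∫ z, FF s z ∂((volume : Measure (ℝ×ℝ)).restrict (univ ×ˢ Ioi (0:ℝ))) by rw [← S_eq]]
  rw [restrict_eq2, integral_prod_symm _ hInt]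
  have : ∀ y ∈ Ioi (0:ℝ), (∫ x, FF s (x, y)) = (Real.sqrt π / Real.sqrt s) * ((y * Real.sqrt y)⁻¹ * EE s y) :=
    fun y hy => inner_FF hs hy
  rw [setIntegral_congr_fun measurableSet_Ioi this, integral_const_mul]
  have hT3 : (∫ y in Ioi (0:ℝ), (y * Real.sqrt y)⁻¹ * EE s y) = T3 s := rfl
  rw [hT3, T3_val hs]
  have hpi : Real.sqrt π * Real.sqrt π = π := Real.mul_self_sqrt Real.pi_pos.le
  have hss : Real.sqrt s * Real.sqrt s = s := Real.mul_self_sqrt hs.le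
  have h1 : Real.sqrt s > 0 := Real.sqrt_pos.mpr hs
  calc Real.sqrt π / Real.sqrt s * (Real.sqrt π * Real.exp (-2*s) / Real.sqrt s)
      = (Real.sqrt π * Real.sqrt π) * Real.exp (-2*s) * (Real.sqrt s * Real.sqrt s)⁻¹ := by ring
    _ = π * Real.exp (-2*s) / s := by rw [hpi, hss]; ring

lemma intOn_FFq {s : ℝ} (hs : 0 < s) :
    IntegrableOn (fun z => FF s z * qq z) {w : ℝ × ℝ | 0 < w.2} := by
  rw [IntegrableOn, S_eq, restrict_eq2]
  have hmeas : Measurable (fun z : ℝ × ℝ => FF s z * qq z) := by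
    apply (FF_meas s).mul
    unfold qq; fun_prop
  rw [integrable_prod_iff' hmeas.aestronglyMeasurable]
  constructor
  · filter_upwards [ae_restrict_mem measurableSet_Ioi] with y hy
    exact intOn_inner_FFq hs hy
  · have hInt2 : Integrable (fun y : ℝ => (Real.sqrt π / Real.sqrt s) *
        ((1/(2*s)) * ((y * Real.sqrt y)⁻¹ * EE s y) + (Real.sqrt y)⁻¹ * EE s y
          + (y^2 * Real.sqrt y)⁻¹ * EE s y)) ((volume : Measure ℝ).restrict (Ioi 0)) := by
      apply Integrable.const_mul
      exact (((intOn_T3 hs).const_mul (1/(2*s))).add (intOn_T1 hs)).add (intOn_T5 hs)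
    apply Integrable.congr hInt2
    filter_upwards [ae_restrict_mem measurableSet_Ioi] with y hy
    rw [← inner_FFq hs hy]
    congr 1
    ext x
    have hq : 0 ≤ qq (x, y) := by
      unfold qq
      have hy0 : (0:ℝ) < y := hy
      positivity
    rw [Real.norm_eq_abs, abs_of_nonneg (mul_nonneg (FF_nonneg s (x, y)) hq)]

lemma int_FFq {s : ℝ} (hs : 0 < s) :
    ∫ z in {w : ℝ × ℝ | 0 < w.2}, FF s z * qq z = π * Real.exp (-2*s) / s * (2 + 1/s) := by
  have hInt : Integrable (fun z => FF s z * qq z) ((volume : Measure ℝ).prod ((volume : Measure ℝ).restrict (Ioi 0))) := by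
    have := intOn_FFq hs
    rwa [IntegrableOn, S_eq, restrict_eq2] at this
  rw [show (∫ z in {w : ℝ × ℝ | 0 < w.2}, FF s z * qq z) = ∫ z, FF s z * qq z ∂((volume : Measure (ℝ×ℝ)).restrict (univ ×ˢ Ioi (0:ℝ))) by rw [← S_eq]]
  rw [restrict_eq2, integral_prod_symm _ hInt]
  have hcong : ∀ y ∈ Ioi (0:ℝ), (∫ x, FF s (x, y) * qq (x, y))
      = (Real.sqrt π / Real.sqrt s) * ((1/(2*s)) * ((y * Real.sqrt y)⁻¹ * EE s y)
          + (Real.sqrt y)⁻¹ * EE s y + (y^2 * Real.sqrt y)⁻¹ * EE s y) :=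
    fun y hy => inner_FFq hs hy
  rw [setIntegral_congr_fun measurableSet_Ioi hcong, integral_const_mul]
  have i1 : Integrable (fun y : ℝ => (1/(2*s)) * ((y * Real.sqrt y)⁻¹ * EE s y)
      + (Real.sqrt y)⁻¹ * EE s y) ((volume : Measure ℝ).restrict (Ioi 0)) :=
    ((intOn_T3 hs).const_mul (1/(2*s))).add (intOn_T1 hs)
  rw [integral_add i1 (intOn_T5 hs), integral_add ((intOn_T3 hs).const_mul (1/(2*s))) (intOn_T1 hs), integral_const_mul]
  have e3 : (∫ y in Ioi (0:ℝ), (y * Real.sqrt y)⁻¹ * EE s y) = T3 s := rfl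
  have e1 : (∫ y in Ioi (0:ℝ), (Real.sqrt y)⁻¹ * EE s y) = T1 s := rfl
  have e5 : (∫ y in Ioi (0:ℝ), (y^2 * Real.sqrt y)⁻¹ * EE s y) = T5 s := rfl
  rw [e3, e1, e5, T3_val hs, T1_val hs, T5_val hs]
  have hpi : Real.sqrt π * Real.sqrt π = π := Real.mul_self_sqrt Real.pi_pos.le
  have hss : Real.sqrt s * Real.sqrt s = s := Real.mul_self_sqrt hs.le
  have h1 : Real.sqrt s > 0 := Real.sqrt_pos.mpr hs
  calc Real.sqrt π / Real.sqrt s * (1/(2*s) * (Real.sqrt π * Real.exp (-2*s) / Real.sqrt s)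
        + Real.sqrt π * Real.exp (-2*s) / Real.sqrt s
        + (Real.sqrt π * Real.exp (-2*s) / Real.sqrt s + Real.sqrt π * Real.exp (-2*s) / (2*s*Real.sqrt s)))
      = (Real.sqrt π * Real.sqrt π) * Real.exp (-2*s) * (Real.sqrt s * Real.sqrt s)⁻¹ * (2 + 1/s) := by ring
    _ = π * Real.exp (-2*s) / s * (2 + 1/s) := by rw [hpi, hss]; ring

-- connection to poincareDensity
noncomputable def Mdiag (s : ℝ) : Matrix (Fin 2) (Fin 2) ℝ := Matrix.diagonal (fun _ => s)

lemma Mdiag_posDef {s : ℝ} (hs : 0 < s) : (Mdiag s).PosDef :=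
  Matrix.PosDef.diagonal (fun _ => hs)

lemma Mdiag_det {s : ℝ} (hs : 0 < s) : Real.sqrt (Mdiag s).det = s := by
  unfold Mdiag
  rw [Matrix.det_diagonal, Fin.prod_univ_two, Real.sqrt_mul_self hs.le]

lemma pd_eq {s : ℝ} (hs : 0 < s) {z : ℝ × ℝ} (hz : 0 < z.2) :
    poincareDensity (Mdiag s) z = (s * Real.exp (2*s) / π) * FF s z := by
  unfold poincareDensity FF
  rw [if_pos hz, Mdiag_det hs]
  have e00 : Mdiag s 0 0 = s := by unfold Mdiag; simp
  have e01 : Mdiag s 0 1 = 0 := by unfold Mdiag; rw [Matrix.diagonal_apply_ne]; decide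
  have e11 : Mdiag s 1 1 = s := by unfold Mdiag; simp
  rw [e00, e01, e11]
  have he : -(s * (z.1 ^ 2 + z.2 ^ 2) + 2 * 0 * z.1 + s) / z.2
      = -(s * (z.1 ^ 2 + z.2 ^ 2 + 1)) / z.2 := by ring
  rw [he]
  ring

lemma S_meas : MeasurableSet {w : ℝ × ℝ | 0 < w.2} :=
  measurableSet_lt measurable_const measurable_snd

lemma FF_eq_exp_qq (s : ℝ) (z : ℝ × ℝ) :
    FF s z = Real.exp (-(s * qq z)) / z.2^2 := by
  unfold FF qq
  rw [neg_div, mul_div_assoc]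

lemma klH_eval {s t : ℝ} (hs : 0 < s) (ht : 0 < t) :
    klH (poincareDensity (Mdiag s)) (poincareDensity (Mdiag t))
      = Real.log s - Real.log t + t/s - 1 := by
  set Cs := s * Real.exp (2*s) / π with hCs
  set Ct := t * Real.exp (2*t) / π with hCt
  have hCs0 : 0 < Cs := by rw [hCs]; positivity
  have hCt0 : 0 < Ct := by rw [hCt]; positivity
  unfold klH
  have hcong : ∀ z ∈ {w : ℝ × ℝ | 0 < w.2},
      poincareDensity (Mdiag s) z * Real.log (poincareDensity (Mdiag s) z / poincareDensity (Mdiag t) z)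
        = ((Real.log Cs - Real.log Ct) * Cs) * FF s z + ((t - s) * Cs) * (FF s z * qq z) := by
    intro z hz
    have hz2 : 0 < z.2 := hz
    rw [pd_eq hs hz2, pd_eq ht hz2]
    have hy2 : (0:ℝ) < z.2^2 := by positivity
    have hFs : 0 < FF s z := by rw [FF_eq_exp_qq]; positivity
    have hFt : 0 < FF t z := by rw [FF_eq_exp_qq]; positivity
    have hlog : ∀ u : ℝ, 0 < u → Real.log (u * Real.exp (2*u)/π * FF u z)
        = Real.log (u * Real.exp (2*u)/π) + (-(u * qq z)) - Real.log (z.2^2) := by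
      intro u hu
      rw [FF_eq_exp_qq, Real.log_mul (by positivity) (by positivity),
        Real.log_div (Real.exp_ne_zero _) hy2.ne', Real.log_exp]
      ring
    rw [Real.log_div (by positivity) (by positivity), hlog s hs, hlog t ht]
    ring
  rw [setIntegral_congr_fun S_meas hcong,
    integral_add (((intOn_FF hs)).const_mul _) ((intOn_FFq hs).const_mul _),
    integral_const_mul, integral_const_mul, int_FF hs, int_FFq hs]
  have hform : Real.exp (-2*s) = (Real.exp (2*s))⁻¹ := by
    rw [show (-2)*s = -(2*s) by ring, Real.exp_neg]
  have hone : Cs * (π * Real.exp (-2*s) / s) = 1 := by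
    rw [hCs, hform]
    field_simp
  have hlogCs : Real.log Cs = Real.log s + 2*s - Real.log π := by
    rw [hCs, Real.log_div (by positivity) (by positivity),
      Real.log_mul hs.ne' (Real.exp_ne_zero _), Real.log_exp]
  have hlogCt : Real.log Ct = Real.log t + 2*t - Real.log π := by
    rw [hCt, Real.log_div (by positivity) (by positivity),
      Real.log_mul ht.ne' (Real.exp_ne_zero _), Real.log_exp]
  have hone2 : Cs * (π * Real.exp (-2*s) / s * (2 + 1/s)) = 2 + 1/s := by
    calc Cs * (π * Real.exp (-2*s) / s * (2 + 1/s))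
        = (Cs * (π * Real.exp (-2*s) / s)) * (2 + 1/s) := by ring
      _ = 2 + 1/s := by rw [hone]; ring
  calc (Real.log Cs - Real.log Ct) * Cs * (π * Real.exp (-2*s)/s)
        + (t - s) * Cs * (π * Real.exp (-2*s)/s * (2 + 1/s))
      = (Real.log Cs - Real.log Ct) * (Cs * (π * Real.exp (-2*s)/s))
        + (t - s) * (Cs * (π * Real.exp (-2*s)/s * (2 + 1/s))) := by ring
    _ = (Real.log Cs - Real.log Ct) + (t - s) * (2 + 1/s) := by rw [hone, hone2]; ring
    _ = Real.log s - Real.log t + t/s - 1 := by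
        rw [hlogCs, hlogCt]
        field_simp
        ring

lemma jeffreys_eval {s t : ℝ} (hs : 0 < s) (ht : 0 < t) :
    jeffreysH (poincareDensity (Mdiag s)) (poincareDensity (Mdiag t)) = t/s + s/t - 2 := by
  unfold jeffreysH
  rw [klH_eval hs ht, klH_eval ht hs]
  ring

/-- for every a > 0, the a-th power of the Jeffreys divergence between
Poincaré distributions fails the triangle inequality, hence is not a metric. -/
theorem jeffreys_power_not_metric (a : ℝ) (ha : 0 < a) :
    ∃ θ₁ θ₂ θ₃ : Matrix (Fin 2) (Fin 2) ℝ, θ₁.PosDef ∧ θ₂.PosDef ∧ θ₃.PosDef ∧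
      jeffreysH (poincareDensity θ₁) (poincareDensity θ₂) ^ a +
          jeffreysH (poincareDensity θ₂) (poincareDensity θ₃) ^ a <
        jeffreysH (poincareDensity θ₁) (poincareDensity θ₃) ^ a := by
  set r : ℝ := (2:ℝ) ^ (1/a) + 2 with hr
  have hr2 : (2:ℝ) ^ (1/a) > 0 := Real.rpow_pos_of_pos (by norm_num) _
  have hr1 : 1 < r := by rw [hr]; linarith
  have hr0 : 0 < r := by linarith
  refine ⟨Mdiag 1, Mdiag r, Mdiag (r^2), Mdiag_posDef one_pos, Mdiag_posDef hr0,
    Mdiag_posDef (pow_pos hr0 2), ?_⟩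
  rw [jeffreys_eval one_pos hr0, jeffreys_eval hr0 (pow_pos hr0 2),
    jeffreys_eval one_pos (pow_pos hr0 2)]
  have e1 : r / 1 + 1 / r - 2 = r + 1/r - 2 := by ring
  have e2 : r^2 / r + r / r^2 - 2 = r + 1/r - 2 := by
    field_simp
  have e3 : r^2 / 1 + 1 / r^2 - 2 = (r + 1/r - 2) * (r + 1/r + 2) := by
    field_simp
    ring
  rw [e1, e2, e3]
  set d : ℝ := r + 1/r - 2 with hd
  have hd0 : 0 < d := by
    rw [hd]
    have : 0 < (r - 1)^2 / r := div_pos (pow_pos (by linarith) 2) hr0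
    calc (0:ℝ) < (r - 1)^2 / r := this
      _ = r + 1/r - 2 := by field_simp; ring
  have hx : (2:ℝ) ^ (1/a) < r + 1/r + 2 := by
    rw [hr]
    have : 0 < 1/r := by positivity
    linarith
  have hpow : (2:ℝ) < (r + 1/r + 2) ^ a := by
    have h1 : ((2:ℝ) ^ (1/a)) ^ a < (r + 1/r + 2) ^ a :=
      Real.rpow_lt_rpow (by positivity) hx ha
    rwa [← Real.rpow_mul (by norm_num : (0:ℝ) ≤ 2), one_div,
      inv_mul_cancel₀ ha.ne', Real.rpow_one] at h1
  have hda : 0 < d ^ a := Real.rpow_pos_of_pos hd0 a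
  rw [Real.mul_rpow hd0.le (by positivity : (0:ℝ) ≤ r + 1/r + 2)]
  calc d ^ a + d ^ a = 2 * d ^ a := by ring
    _ < (r + 1/r + 2) ^ a * d ^ a := by
        apply mul_lt_mul_of_pos_right hpow hda
    _ = d ^ a * (r + 1/r + 2) ^ a := by ring
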